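/- arXiv:2003.09195 — 4 statements merged into one kernel-verified Lean document; each statement's English description precedes it below -/
import Mathlib

section
/- Let X ∈ ℝ^{n×p} be a matrix each of whose columns has unit Euclidean norm, and let W ∈ ℝ^{p×r}. Then ‖W‖_F ≤ ‖𝒜_X(W)‖_* ≤ √r · ‖W‖_{2,1}, where ‖·‖_F is the Frobenius norm, ‖·‖_* is the nuclear norm and ‖W‖_{2,1} = Σ_{j=1}^p ‖W_{j·}‖₂ is the sum of the Euclidean norms of the rows of W. -/
open Matrix

/-- Euclidean norm of a vector. -/
noncomputable def eucNorm {n : Type*} [Fintype n] (x : n → ℝ) : ℝ :=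
  Real.sqrt (∑ i, x i ^ 2)

/-- Frobenius norm of a matrix. -/
noncomputable def frob {m n : Type*} [Fintype m] [Fintype n] (A : Matrix m n ℝ) : ℝ :=
  Real.sqrt (∑ i, ∑ j, A i j ^ 2)

/-- Frobenius inner product ⟨A, B⟩_F = tr(Aᵀ B). -/
noncomputable def frobInner {m n : Type*} [Fintype m] [Fintype n]
    (A B : Matrix m n ℝ) : ℝ :=
  (Aᵀ * B).trace

/-- The ℓ₂ → ℓ₂ operator (spectral) norm of a matrix. -/
noncomputable def opNorm {m n : Type*} [Fintype m] [Fintype n] [DecidableEq n]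
    (M : Matrix m n ℝ) : ℝ :=
  ‖LinearMap.toContinuousLinearMap (Matrix.toEuclideanLin M)‖

/-- The nuclear norm, defined by duality with the operator norm:
‖A‖_* = sup { ⟨M, A⟩_F : ‖M‖_op ≤ 1 }. -/
noncomputable def nuclearNorm {m n : Type*} [Fintype m] [Fintype n] [DecidableEq n]
    (A : Matrix m n ℝ) : ℝ :=
  sSup {c : ℝ | ∃ M : Matrix m n ℝ, opNorm M ≤ 1 ∧ c = frobInner M A}

/-- The operator 𝒜_X : ℝ^{p×r} → ℝ^{n×(pr)}, W ↦ (X·Diag(W_{·1}), …, X·Diag(W_{·r})),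
where the column ((i-1)p + j) of the concatenation is indexed by the pair (i, j). -/
noncomputable def traceLassoOp {n p r : ℕ} (X : Matrix (Fin n) (Fin p) ℝ)
    (W : Matrix (Fin p) (Fin r) ℝ) : Matrix (Fin n) (Fin r × Fin p) ℝ :=
  fun a ij => X a ij.2 * W ij.2 ij.1

lemma mulVec_eucNorm_le {m q : Type*} [Fintype m] [Fintype q] [DecidableEq q]
    (M : Matrix m q ℝ) (x : q → ℝ) :
    Real.sqrt (∑ i, (M *ᵥ x) i ^ 2) ≤ opNorm M * Real.sqrt (∑ i, x i ^ 2) := by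
  have h := (LinearMap.toContinuousLinearMap (Matrix.toEuclideanLin M)).le_opNorm
    ((WithLp.equiv 2 (q → ℝ)).symm x)
  have h1 : ‖((WithLp.equiv 2 (q → ℝ)).symm x : EuclideanSpace ℝ q)‖
      = Real.sqrt (∑ i, x i ^ 2) := by
    rw [EuclideanSpace.norm_eq]
    simp [Real.norm_eq_abs, sq_abs]
  have h2 : (LinearMap.toContinuousLinearMap (Matrix.toEuclideanLin M))
      ((WithLp.equiv 2 (q → ℝ)).symm x) = (WithLp.equiv 2 (m → ℝ)).symm (M *ᵥ x) := by
    simp [Matrix.toEuclideanLin_apply_piLp_toLp]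
  rw [h2, h1] at h
  calc Real.sqrt (∑ i, (M *ᵥ x) i ^ 2)
      = ‖((WithLp.equiv 2 (m → ℝ)).symm (M *ᵥ x) : EuclideanSpace ℝ m)‖ := by
        rw [EuclideanSpace.norm_eq]; simp [Real.norm_eq_abs, sq_abs]
    _ ≤ _ := h

lemma frobInner_eq {m n : Type*} [Fintype m] [Fintype n] (A B : Matrix m n ℝ) :
    frobInner A B = ∑ i, ∑ j, A i j * B i j := by
  rw [frobInner, Matrix.trace]
  simp only [Matrix.diag_apply, Matrix.mul_apply, Matrix.transpose_apply]
  exact Finset.sum_comm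

lemma opNorm_le_frob {m q : Type*} [Fintype m] [Fintype q] [DecidableEq q]
    (M : Matrix m q ℝ) : opNorm M ≤ frob M := by
  have hf : 0 ≤ frob M := Real.sqrt_nonneg _
  refine ContinuousLinearMap.opNorm_le_bound _ hf (fun x => ?_)
  have h2 : (LinearMap.toContinuousLinearMap (Matrix.toEuclideanLin M)) x
      = (WithLp.equiv 2 (m → ℝ)).symm (M *ᵥ ((WithLp.equiv 2 (q → ℝ)) x)) := by
    simp [Matrix.toEuclideanLin_apply]
  set y : q → ℝ := (WithLp.equiv 2 (q → ℝ)) x with hy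
  have hx : ‖x‖ = Real.sqrt (∑ i, y i ^ 2) := by
    rw [EuclideanSpace.norm_eq]; simp [Real.norm_eq_abs, sq_abs]; rfl
  rw [h2, hx]
  have hnorm : ‖((WithLp.equiv 2 (m → ℝ)).symm (M *ᵥ y) : EuclideanSpace ℝ m)‖
      = Real.sqrt (∑ i, (M *ᵥ y) i ^ 2) := by
    rw [EuclideanSpace.norm_eq]; simp [Real.norm_eq_abs, sq_abs]
  rw [hnorm]
  have key : ∑ i, (M *ᵥ y) i ^ 2 ≤ (∑ i, ∑ j, M i j ^ 2) * (∑ j, y j ^ 2) := by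
    rw [Finset.sum_mul]
    refine Finset.sum_le_sum (fun i _ => ?_)
    simpa [Matrix.mulVec, dotProduct] using
      Finset.sum_mul_sq_le_sq_mul_sq Finset.univ (fun j => M i j) y
  calc Real.sqrt (∑ i, (M *ᵥ y) i ^ 2)
      ≤ Real.sqrt ((∑ i, ∑ j, M i j ^ 2) * (∑ j, y j ^ 2)) := Real.sqrt_le_sqrt key
    _ = frob M * Real.sqrt (∑ j, y j ^ 2) := by
        rw [Real.sqrt_mul (by positivity)]; rfl

lemma opNorm_smul {m q : Type*} [Fintype m] [Fintype q] [DecidableEq q]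
    (c : ℝ) (M : Matrix m q ℝ) : opNorm (c • M) = |c| * opNorm M := by
  rw [opNorm, opNorm, _root_.map_smul, _root_.map_smul]
  rw [show |c| = ‖c‖ from (Real.norm_eq_abs c).symm]
  exact norm_smul (β := EuclideanSpace ℝ q →L[ℝ] EuclideanSpace ℝ m) c (LinearMap.toContinuousLinearMap (Matrix.toEuclideanLin M))

lemma opNorm_zero {m q : Type*} [Fintype m] [Fintype q] [DecidableEq q] :
    opNorm (0 : Matrix m q ℝ) = 0 := by
  rw [opNorm, _root_.map_zero, _root_.map_zero, norm_zero]

lemma upper_key {n p r : ℕ} (X : Matrix (Fin n) (Fin p) ℝ) (W : Matrix (Fin p) (Fin r) ℝ)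
    (hX : ∀ j : Fin p, eucNorm (fun a => X a j) = 1)
    (M : Matrix (Fin n) (Fin r × Fin p) ℝ) (hM : opNorm M ≤ 1) :
    frobInner M (traceLassoOp X W) ≤ ∑ j : Fin p, eucNorm (W j) := by
  set v : Fin p → Fin r → ℝ := fun j i => ∑ a, M a (i, j) * X a j with hv
  have hXsq : ∀ j, ∑ a, X a j ^ 2 = 1 := by
    intro j
    have h1 := hX j
    rw [eucNorm] at h1
    have h0 : 0 ≤ ∑ a, X a j ^ 2 := Finset.sum_nonneg (fun a _ => sq_nonneg _)
    nlinarith [Real.sq_sqrt h0]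
  have hvle : ∀ j, eucNorm (v j) ≤ 1 := by
    intro j
    set S := ∑ i, v j i ^ 2 with hSdef
    have hS0 : 0 ≤ S := Finset.sum_nonneg (fun i _ => sq_nonneg _)
    set x : Fin r × Fin p → ℝ := fun c => if c.2 = j then v j c.1 else 0 with hx
    have hxsum : ∑ c, x c ^ 2 = S := by
      rw [Fintype.sum_prod_type]
      simp only [hx, apply_ite (fun t : ℝ => t ^ 2)]
      simp [Finset.sum_ite_eq', hSdef]
    have hmv : ∀ a, (M *ᵥ x) a = ∑ i, M a (i, j) * v j i := by
      intro a
      simp only [Matrix.mulVec, dotProduct, hx]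
      rw [Fintype.sum_prod_type]
      simp [mul_ite, Finset.sum_ite_eq']
    have hinner : ∑ a, X a j * (M *ᵥ x) a = S := by
      simp only [hmv, Finset.mul_sum]
      rw [Finset.sum_comm]
      refine Finset.sum_congr rfl (fun i _ => ?_)
      calc ∑ a, X a j * (M a (i, j) * v j i)
          = (∑ a, M a (i, j) * X a j) * v j i := by
            rw [Finset.sum_mul]; exact Finset.sum_congr rfl fun a _ => by ring
        _ = v j i ^ 2 := by show v j i * v j i = v j i ^ 2; ring
    have hCS := Real.sum_mul_le_sqrt_mul_sqrt Finset.univ (fun a => X a j)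
      (fun a => (M *ᵥ x) a)
    rw [hinner, hXsq j, Real.sqrt_one, one_mul] at hCS
    have hbound := mulVec_eucNorm_le M x
    rw [hxsum] at hbound
    have hfin : S ≤ Real.sqrt S := by
      refine hCS.trans (hbound.trans ?_)
      have := Real.sqrt_nonneg S
      nlinarith
    have hS1 : S ≤ 1 := by
      nlinarith [Real.sq_sqrt hS0, Real.sqrt_nonneg S]
    rw [eucNorm]
    exact Real.sqrt_le_one.2 hS1
  have hfr : frobInner M (traceLassoOp X W) = ∑ j, ∑ i, W j i * v j i := by
    rw [frobInner_eq, Finset.sum_comm, Fintype.sum_prod_type, Finset.sum_comm]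
    refine Finset.sum_congr rfl fun j _ => Finset.sum_congr rfl fun i _ => ?_
    rw [Finset.mul_sum]
    exact Finset.sum_congr rfl fun a _ => by simp only [traceLassoOp]; ring
  rw [hfr]
  refine Finset.sum_le_sum fun j _ => ?_
  calc ∑ i, W j i * v j i
      ≤ Real.sqrt (∑ i, W j i ^ 2) * Real.sqrt (∑ i, v j i ^ 2) :=
        Real.sum_mul_le_sqrt_mul_sqrt _ _ _
    _ = eucNorm (W j) * eucNorm (v j) := rfl
    _ ≤ eucNorm (W j) * 1 := mul_le_mul_of_nonneg_left (hvle j) (Real.sqrt_nonneg _)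
    _ = eucNorm (W j) := mul_one _

lemma traceLasso_sq_sum {n p r : ℕ} (X : Matrix (Fin n) (Fin p) ℝ)
    (W : Matrix (Fin p) (Fin r) ℝ) (hXsq : ∀ j, ∑ a, X a j ^ 2 = 1) :
    ∑ a, ∑ c : Fin r × Fin p, traceLassoOp X W a c ^ 2 = ∑ j, ∑ i, W j i ^ 2 := by
  rw [Finset.sum_comm, Fintype.sum_prod_type, Finset.sum_comm]
  refine Finset.sum_congr rfl fun j _ => Finset.sum_congr rfl fun i _ => ?_
  calc ∑ a, traceLassoOp X W a (i, j) ^ 2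
      = (∑ a, X a j ^ 2) * W j i ^ 2 := by
        rw [Finset.sum_mul]
        exact Finset.sum_congr rfl fun a _ => by simp only [traceLassoOp]; ring
    _ = W j i ^ 2 := by rw [hXsq j, one_mul]

/-- If every column of X has unit Euclidean norm, then
‖W‖_F ≤ ‖𝒜_X(W)‖_* ≤ √r · ‖W‖_{2,1}. -/
theorem stmt_0 {n p r : ℕ} (X : Matrix (Fin n) (Fin p) ℝ) (W : Matrix (Fin p) (Fin r) ℝ)
    (hX : ∀ j : Fin p, eucNorm (fun a => X a j) = 1) :
    frob W ≤ nuclearNorm (traceLassoOp X W) ∧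
      nuclearNorm (traceLassoOp X W) ≤ Real.sqrt r * ∑ j : Fin p, eucNorm (W j) := by
  have hXsq : ∀ j, ∑ a, X a j ^ 2 = 1 := by
    intro j
    have h1 := hX j
    rw [eucNorm] at h1
    have h0 : 0 ≤ ∑ a, X a j ^ 2 := Finset.sum_nonneg (fun a _ => sq_nonneg _)
    nlinarith [Real.sq_sqrt h0]
  set A := traceLassoOp X W with hA
  have hbdd : BddAbove {c : ℝ | ∃ M, opNorm M ≤ 1 ∧ c = frobInner M A} := by
    refine ⟨∑ j, eucNorm (W j), ?_⟩
    rintro c ⟨M, hM, rfl⟩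
    exact upper_key X W hX M hM
  have hzero : (0 : ℝ) ∈ {c : ℝ | ∃ M, opNorm M ≤ 1 ∧ c = frobInner M A} := by
    refine ⟨0, le_of_eq_of_le opNorm_zero zero_le_one, ?_⟩
    rw [frobInner_eq]
    simp
  constructor
  · by_cases hW : frob W = 0
    · rw [hW]
      exact le_csSup hbdd hzero
    · have hfW : 0 < frob W := lt_of_le_of_ne (Real.sqrt_nonneg _) (Ne.symm hW)
      set M0 : Matrix (Fin n) (Fin r × Fin p) ℝ := (frob W)⁻¹ • A with hM0
      have hSA : ∑ a, ∑ c : Fin r × Fin p, A a c ^ 2 = ∑ j, ∑ i, W j i ^ 2 :=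
        traceLasso_sq_sum X W hXsq
      have hfrobA : frob A = frob W := by rw [frob, frob, hSA]
      have hop : opNorm M0 ≤ 1 := by
        rw [hM0, opNorm_smul, abs_of_pos (inv_pos.2 hfW)]
        calc (frob W)⁻¹ * opNorm A ≤ (frob W)⁻¹ * frob A :=
              mul_le_mul_of_nonneg_left (opNorm_le_frob A) (le_of_lt (inv_pos.2 hfW))
          _ = 1 := by rw [hfrobA, inv_mul_cancel₀ hW]
      have hval : frobInner M0 A = frob W := by
        rw [frobInner_eq]
        have hterm : ∀ a c, M0 a c * A a c = (frob W)⁻¹ * A a c ^ 2 := by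
          intro a c
          simp only [hM0, Matrix.smul_apply, smul_eq_mul]
          ring
        simp_rw [hterm, ← Finset.mul_sum]
        rw [hSA]
        have hW2 : ∑ j, ∑ i, W j i ^ 2 = frob W ^ 2 := by
          rw [frob, Real.sq_sqrt (by positivity)]
        rw [hW2, sq, ← mul_assoc, inv_mul_cancel₀ hW, one_mul]
      exact le_csSup hbdd ⟨M0, hop, hval.symm⟩
  · refine csSup_le ⟨0, hzero⟩ ?_
    rintro c ⟨M, hM, rfl⟩
    refine (upper_key X W hX M hM).trans ?_
    by_cases hr : r = 0
    · subst hr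
      simp [eucNorm]
    · have h1 : (1 : ℝ) ≤ Real.sqrt r := by
        rw [show (1 : ℝ) = Real.sqrt 1 from Real.sqrt_one.symm]
        exact Real.sqrt_le_sqrt (by exact_mod_cast Nat.one_le_iff_ne_zero.2 hr)
      have hsum0 : 0 ≤ ∑ j, eucNorm (W j) :=
        Finset.sum_nonneg fun j _ => Real.sqrt_nonneg _
      nlinarith
end

section
/- Let X ∈ ℝ^{n×p} be a matrix each of whose columns has unit Euclidean norm, let W ∈ ℝ^{p×r}, and let M ∈ ℝ^{n×(pr)} satisfy ‖M‖_op ≤ 1, where ‖·‖_op is the ℓ₂→ℓ₂ operator (spectral) norm. Then ⟨M, 𝒜_X(W)⟩_F ≤ √r · Σ_{j=1}^{p} ‖W_{j·}‖₂, where W_{j·} denotes the j-th row of W. -/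
open Matrix

/-- Euclidean norm of a vector. -/
noncomputable def euclidNorm {n : Type*} [Fintype n] (x : n → ℝ) : ℝ :=
  Real.sqrt (∑ i, x i ^ 2)

/-- If each column of X has unit norm and ‖M‖_op ≤ 1, then
⟨M, 𝒜_X(W)⟩_F ≤ √r · Σⱼ ‖W_{j·}‖₂. -/
theorem stmt_4 {n p r : ℕ} (X : Matrix (Fin n) (Fin p) ℝ) (W : Matrix (Fin p) (Fin r) ℝ)
    (M : Matrix (Fin n) (Fin r × Fin p) ℝ)
    (hX : ∀ j : Fin p, euclidNorm (fun a => X a j) = 1)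
    (hM : opNorm M ≤ 1) :
    frobInner M (traceLassoOp X W) ≤ Real.sqrt r * ∑ j : Fin p, euclidNorm (W j) := by
  -- column sums of squares of X equal 1
  have hXsq : ∀ j : Fin p, (∑ a, X a j ^ 2) = 1 := by
    intro j
    have h := hX j
    unfold euclidNorm at h
    have hnn : (0:ℝ) ≤ ∑ a, X a j ^ 2 := Finset.sum_nonneg fun _ _ => sq_nonneg _
    nlinarith [Real.sq_sqrt hnn, Real.sqrt_nonneg (∑ a, X a j ^ 2)]
  -- each column of M has norm ≤ 1
  have hMcol : ∀ ij : Fin r × Fin p, (∑ a, M a ij ^ 2) ≤ 1 := by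
    intro ij
    set L := LinearMap.toContinuousLinearMap (Matrix.toEuclideanLin M) with hL
    have he : ‖(EuclideanSpace.single ij (1:ℝ) : EuclideanSpace ℝ (Fin r × Fin p))‖ = 1 := by
      simp [EuclideanSpace.norm_single]
    have hle : ‖L (EuclideanSpace.single ij (1:ℝ))‖ ≤ 1 := by
      calc ‖L (EuclideanSpace.single ij (1:ℝ))‖
          ≤ ‖L‖ * ‖(EuclideanSpace.single ij (1:ℝ) : EuclideanSpace ℝ (Fin r × Fin p))‖ :=
            L.le_opNorm _
        _ ≤ 1 := by rw [he, mul_one]; exact hM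
    have happ : (L (EuclideanSpace.single ij (1:ℝ)) : EuclideanSpace ℝ (Fin n)) =
        (WithLp.equiv 2 (Fin n → ℝ)).symm (fun a => M a ij) := by
      show Matrix.toEuclideanLin M (EuclideanSpace.single ij (1:ℝ)) = _
      have : (EuclideanSpace.single ij (1:ℝ) : EuclideanSpace ℝ (Fin r × Fin p)) =
          (WithLp.equiv 2 _).symm (Pi.single ij (1:ℝ)) := rfl
      rw [this, WithLp.equiv_symm_apply, Matrix.toEuclideanLin_apply_piLp_toLp, Matrix.mulVec_single]
      simp
      rfl
    have hnorm : ‖L (EuclideanSpace.single ij (1:ℝ))‖ =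
        Real.sqrt (∑ a, M a ij ^ 2) := by
      rw [happ, EuclideanSpace.norm_eq]
      congr 1
      apply Finset.sum_congr rfl
      intro a _
      simp [Real.norm_eq_abs, sq_abs]
    rw [hnorm] at hle
    have hnn : (0:ℝ) ≤ ∑ a, M a ij ^ 2 := Finset.sum_nonneg fun _ _ => sq_nonneg _
    nlinarith [Real.sq_sqrt hnn, Real.sqrt_nonneg (∑ a, M a ij ^ 2)]
  -- define v j i = ∑ a, M a (i,j) * X a j
  set v : Fin p → Fin r → ℝ := fun j i => ∑ a, M a (i, j) * X a j with hv
  have hvsq : ∀ j i, (v j i) ^ 2 ≤ 1 := by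
    intro j i
    calc (v j i) ^ 2 ≤ (∑ a, M a (i, j) ^ 2) * (∑ a, X a j ^ 2) :=
          Finset.sum_mul_sq_le_sq_mul_sq _ _ _
      _ ≤ 1 := by rw [hXsq j, mul_one]; exact hMcol (i, j)
  -- rewrite the Frobenius inner product
  have hfrob : frobInner M (traceLassoOp X W) = ∑ j : Fin p, ∑ i : Fin r, W j i * v j i := by
    unfold frobInner traceLassoOp
    rw [Matrix.trace]
    simp only [Matrix.diag_apply, Matrix.mul_apply, Matrix.transpose_apply, hv]
    rw [Fintype.sum_prod_type]
    rw [Finset.sum_comm]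
    congr 1; ext j; congr 1; ext i
    rw [Finset.mul_sum]
    refine (Matrix.mul_apply (M := Mᵀ) (N := (fun a ij => X a ij.2 * W ij.2 ij.1 : Matrix (Fin n) (Fin r × Fin p) ℝ))).trans ?_; congr 1; ext a; simp only [Matrix.transpose_apply]; ring
  rw [hfrob]
  have hstep : ∀ j : Fin p, ∑ i : Fin r, W j i * v j i ≤ Real.sqrt r * euclidNorm (W j) := by
    intro j
    have h1 : (∑ i : Fin r, W j i * v j i) ^ 2 ≤ (∑ i, W j i ^ 2) * (∑ i, (v j i) ^ 2) :=
      Finset.sum_mul_sq_le_sq_mul_sq _ _ _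
    have h2 : (∑ i, (v j i) ^ 2) ≤ (r : ℝ) := by
      calc (∑ i, (v j i) ^ 2) ≤ ∑ _i : Fin r, (1:ℝ) :=
            Finset.sum_le_sum fun i _ => hvsq j i
        _ = r := by simp
    have hWnn : (0:ℝ) ≤ ∑ i, W j i ^ 2 := Finset.sum_nonneg fun _ _ => sq_nonneg _
    calc ∑ i : Fin r, W j i * v j i ≤ |∑ i : Fin r, W j i * v j i| := le_abs_self _
      _ = Real.sqrt ((∑ i : Fin r, W j i * v j i) ^ 2) := (Real.sqrt_sq_eq_abs _).symm
      _ ≤ Real.sqrt ((∑ i, W j i ^ 2) * r) := by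
          apply Real.sqrt_le_sqrt
          calc (∑ i : Fin r, W j i * v j i) ^ 2
              ≤ (∑ i, W j i ^ 2) * (∑ i, (v j i) ^ 2) := h1
            _ ≤ (∑ i, W j i ^ 2) * r := by
                exact mul_le_mul_of_nonneg_left h2 hWnn
      _ = Real.sqrt r * euclidNorm (W j) := by
          rw [Real.sqrt_mul hWnn, mul_comm]
          unfold euclidNorm
          rfl
  calc ∑ j : Fin p, ∑ i : Fin r, W j i * v j i
      ≤ ∑ j : Fin p, Real.sqrt r * euclidNorm (W j) := Finset.sum_le_sum fun j _ => hstep j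
    _ = Real.sqrt r * ∑ j : Fin p, euclidNorm (W j) := by rw [Finset.mul_sum]
end

section
/- Let X ∈ ℝ^{n×p} satisfy XᵀX = I_p (the columns of X are orthonormal), and let W ∈ ℝ^{p×r}. Then ‖𝒜_X(W)‖_* = ‖W‖_{2,1}, where ‖W‖_{2,1} = Σ_{j=1}^{p} ‖W_{j·}‖₂ is the sum of the Euclidean norms of the rows of W. -/
open Matrix

/-- Euclidean norm of a vector. -/
noncomputable def enorm {n : Type*} [Fintype n] (x : n → ℝ) : ℝ :=
  Real.sqrt (∑ i, x i ^ 2)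

/-- Cauchy–Schwarz in square-root form. -/
lemma cs_sqrt {ι : Type*} [Fintype ι] (f g : ι → ℝ) :
    ∑ i, f i * g i ≤ Real.sqrt (∑ i, f i ^ 2) * Real.sqrt (∑ i, g i ^ 2) := by
  have h := Finset.sum_mul_sq_le_sq_mul_sq Finset.univ f g
  calc ∑ i, f i * g i ≤ |∑ i, f i * g i| := le_abs_self _
    _ = Real.sqrt ((∑ i, f i * g i) ^ 2) := (Real.sqrt_sq_eq_abs _).symm
    _ ≤ Real.sqrt ((∑ i, f i ^ 2) * ∑ i, g i ^ 2) := Real.sqrt_le_sqrt h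
    _ = _ := Real.sqrt_mul (by positivity) _

lemma ortho_sum {n p : ℕ} {X : Matrix (Fin n) (Fin p) ℝ} (hX : Xᵀ * X = 1) (c : Fin p → ℝ) :
    ∑ a, (∑ j, X a j * c j) ^ 2 = ∑ j, c j ^ 2 := by
  have h : ∀ a, (∑ j, X a j * c j) = X.mulVec c a := by
    intro a; simp [Matrix.mulVec, dotProduct]
  simp_rw [h, sq]
  have h2 : ∑ a, X.mulVec c a * X.mulVec c a = (X.mulVec c) ⬝ᵥ (X.mulVec c) := rfl
  rw [h2, Matrix.dotProduct_mulVec, Matrix.vecMul_mulVec, hX]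
  simp [dotProduct]

lemma col_sq_one {n p : ℕ} {X : Matrix (Fin n) (Fin p) ℝ} (hX : Xᵀ * X = 1) (j : Fin p) :
    ∑ a, X a j ^ 2 = 1 := by
  have := congrFun (congrFun hX j) j
  simpa [Matrix.mul_apply, Matrix.one_apply, sq] using this

lemma mulVec_tlo {n p r : ℕ} (X : Matrix (Fin n) (Fin p) ℝ) (V : Matrix (Fin p) (Fin r) ℝ)
    (v : Fin r × Fin p → ℝ) (a : Fin n) :
    (traceLassoOp X V).mulVec v a = ∑ j, X a j * ∑ i, V j i * v (i, j) := by
  rw [Matrix.mulVec, dotProduct, Fintype.sum_prod_type_right]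
  apply Finset.sum_congr rfl; intro j _
  rw [Finset.mul_sum]
  apply Finset.sum_congr rfl; intro i _
  simp [traceLassoOp]; ring


lemma tlo_bound {n p r : ℕ} {X : Matrix (Fin n) (Fin p) ℝ} (hX : Xᵀ * X = 1)
    (V : Matrix (Fin p) (Fin r) ℝ) (hV : ∀ j, ∑ i, V j i ^ 2 ≤ 1)
    (w : Fin r × Fin p → ℝ) :
    ∑ a, ((traceLassoOp X V).mulVec w a) ^ 2 ≤ ∑ ij : Fin r × Fin p, w ij ^ 2 := by
  calc ∑ a, ((traceLassoOp X V).mulVec w a) ^ 2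
      = ∑ j, (∑ i, V j i * w (i, j)) ^ 2 := by
        simp_rw [mulVec_tlo]; exact ortho_sum hX _
    _ ≤ ∑ j, ∑ i, w (i, j) ^ 2 := by
        apply Finset.sum_le_sum; intro j _
        calc (∑ i, V j i * w (i, j)) ^ 2
            ≤ (∑ i, V j i ^ 2) * ∑ i, w (i, j) ^ 2 :=
              Finset.sum_mul_sq_le_sq_mul_sq _ _ _
          _ ≤ 1 * ∑ i, w (i, j) ^ 2 := by
              apply mul_le_mul_of_nonneg_right (hV j) (by positivity)
          _ = _ := one_mul _
    _ = ∑ ij : Fin r × Fin p, w ij ^ 2 := by rw [Fintype.sum_prod_type_right]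

lemma opNorm_tlo_le {n p r : ℕ} {X : Matrix (Fin n) (Fin p) ℝ} (hX : Xᵀ * X = 1)
    (V : Matrix (Fin p) (Fin r) ℝ) (hV : ∀ j, ∑ i, V j i ^ 2 ≤ 1) :
    opNorm (traceLassoOp X V) ≤ 1 := by
  rw [opNorm]
  apply ContinuousLinearMap.opNorm_le_bound _ zero_le_one
  intro v
  rw [one_mul, LinearMap.coe_toContinuousLinearMap', Matrix.toEuclideanLin_apply,
    EuclideanSpace.norm_eq, EuclideanSpace.norm_eq]
  apply Real.sqrt_le_sqrt
  simp only [Real.norm_eq_abs, sq_abs]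
  exact tlo_bound hX V hV _

lemma frobInner_tlo {n p r : ℕ} (X : Matrix (Fin n) (Fin p) ℝ)
    (W : Matrix (Fin p) (Fin r) ℝ) (M : Matrix (Fin n) (Fin r × Fin p) ℝ) :
    frobInner M (traceLassoOp X W) = ∑ j, ∑ i, W j i * ∑ a, M a (i, j) * X a j := by
  rw [frobInner, Matrix.trace]
  simp only [Matrix.diag_apply, Matrix.mul_apply, Matrix.transpose_apply, traceLassoOp]
  rw [Fintype.sum_prod_type_right]
  apply Finset.sum_congr rfl; intro j _
  apply Finset.sum_congr rfl; intro i _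
  rw [Finset.mul_sum]
  apply Finset.sum_congr rfl; intro a _; ring

lemma frobInner_ub {n p r : ℕ} {X : Matrix (Fin n) (Fin p) ℝ} (hX : Xᵀ * X = 1)
    (W : Matrix (Fin p) (Fin r) ℝ) (M : Matrix (Fin n) (Fin r × Fin p) ℝ)
    (hM : opNorm M ≤ 1) :
    frobInner M (traceLassoOp X W) ≤ ∑ j, _root_.enorm (W j) := by
  rw [frobInner_tlo]
  apply Finset.sum_le_sum; intro j _
  set u : Fin r → ℝ := fun i => ∑ a, M a (i, j) * X a j with hu
  have hun : Real.sqrt (∑ i, u i ^ 2) ≤ 1 := by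
    set y : Fin r × Fin p → ℝ := fun ij => if ij.2 = j then u ij.1 else 0 with hy
    have hyn : ∑ ij : Fin r × Fin p, y ij ^ 2 = ∑ i, u i ^ 2 := by
      rw [Fintype.sum_prod_type_right]
      rw [Finset.sum_eq_single j]
      · simp [hy]
      · intro j' _ hj'; simp [hy, hj']
      · simp
    have hmv : ∀ a, M.mulVec y a = ∑ i, M a (i, j) * u i := by
      intro a
      rw [Matrix.mulVec, dotProduct, Fintype.sum_prod_type_right]
      rw [Finset.sum_eq_single j]
      · simp [hy]
      · intro j' _ hj'; simp [hy, hj']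
      · simp
    have hs : ∑ i, u i ^ 2 = ∑ a, M.mulVec y a * X a j := by
      simp_rw [hmv, Finset.sum_mul]
      rw [Finset.sum_comm]
      apply Finset.sum_congr rfl; intro i _
      have : ∑ a, M a (i, j) * u i * X a j = (∑ a, M a (i, j) * X a j) * u i := by
        rw [Finset.sum_mul]
        apply Finset.sum_congr rfl; intro a _; ring
      rw [this, show (∑ a, M a (i, j) * X a j) = u i from rfl]
      ring
    -- operator norm bound
    have hop : Real.sqrt (∑ a, (M.mulVec y a) ^ 2) ≤ Real.sqrt (∑ ij, y ij ^ 2) := by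
      have h1 := (LinearMap.toContinuousLinearMap (Matrix.toEuclideanLin M)).le_opNorm
        ((WithLp.equiv 2 _).symm y)
      rw [LinearMap.coe_toContinuousLinearMap', Matrix.toEuclideanLin_apply,
        EuclideanSpace.norm_eq, EuclideanSpace.norm_eq] at h1
      have h2 := h1.trans (mul_le_of_le_one_left (by positivity) hM)
      simpa [Real.norm_eq_abs, sq_abs] using h2
    have hle : ∑ i, u i ^ 2 ≤ Real.sqrt (∑ i, u i ^ 2) := by
      calc ∑ i, u i ^ 2 = ∑ a, M.mulVec y a * X a j := hs
        _ ≤ Real.sqrt (∑ a, (M.mulVec y a) ^ 2) * Real.sqrt (∑ a, X a j ^ 2) := cs_sqrt _ _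
        _ = Real.sqrt (∑ a, (M.mulVec y a) ^ 2) := by rw [col_sq_one hX, Real.sqrt_one, mul_one]
        _ ≤ Real.sqrt (∑ ij, y ij ^ 2) := hop
        _ = Real.sqrt (∑ i, u i ^ 2) := by rw [hyn]
    have h0 : (0:ℝ) ≤ ∑ i, u i ^ 2 := by positivity
    nlinarith [Real.sq_sqrt h0, Real.sqrt_nonneg (∑ i, u i ^ 2)]
  calc ∑ i, W j i * u i
      ≤ Real.sqrt (∑ i, W j i ^ 2) * Real.sqrt (∑ i, u i ^ 2) := cs_sqrt _ _
    _ ≤ Real.sqrt (∑ i, W j i ^ 2) * 1 :=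
        mul_le_mul_of_nonneg_left hun (Real.sqrt_nonneg _)
    _ = _root_.enorm (W j) := by rw [mul_one]; rfl

/-- If XᵀX = I_p then ‖𝒜_X(W)‖_* = ‖W‖_{2,1} = Σⱼ ‖W_{j·}‖₂. -/
theorem stmt_5 {n p r : ℕ} (X : Matrix (Fin n) (Fin p) ℝ) (W : Matrix (Fin p) (Fin r) ℝ)
    (hX : Xᵀ * X = 1) :
    nuclearNorm (traceLassoOp X W) = ∑ j : Fin p, _root_.enorm (W j) := by
  set V : Matrix (Fin p) (Fin r) ℝ := fun j i => W j i / _root_.enorm (W j) with hVdef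
  have hV : ∀ j, ∑ i, V j i ^ 2 ≤ 1 := by
    intro j
    simp only [hVdef, div_pow]
    rw [← Finset.sum_div]
    rcases eq_or_ne (_root_.enorm (W j)) 0 with h | h
    · rw [h]; simp
    · rw [_root_.enorm] at h ⊢
      have hz : ∑ i, W j i ^ 2 ≠ 0 := fun hc => h (by rw [hc, Real.sqrt_zero])
      rw [Real.sq_sqrt (by positivity), div_self hz]
  have hmemval : frobInner (traceLassoOp X V) (traceLassoOp X W) = ∑ j, _root_.enorm (W j) := by
    rw [frobInner_tlo]
    apply Finset.sum_congr rfl; intro j _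
    have hcol : ∀ i : Fin r, ∑ a, traceLassoOp X V a (i, j) * X a j = V j i := by
      intro i
      simp only [traceLassoOp]
      have : ∑ a, X a j * V j i * X a j = V j i * ∑ a, X a j ^ 2 := by
        rw [Finset.mul_sum]; apply Finset.sum_congr rfl; intro a _; ring
      rw [this, col_sq_one hX, mul_one]
    simp_rw [hcol]
    rcases eq_or_ne (_root_.enorm (W j)) 0 with h | h
    · have hz : ∑ i, W j i ^ 2 = 0 := by
        rw [_root_.enorm] at h
        nlinarith [Real.sq_sqrt (show (0:ℝ) ≤ ∑ i, W j i ^ 2 by positivity), h]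
      have hall : ∀ i, W j i = 0 := by
        intro i
        have := Finset.sum_eq_zero_iff_of_nonneg (fun i _ => sq_nonneg (W j i)) |>.1 hz i
          (Finset.mem_univ i)
        exact pow_eq_zero_iff (n := 2) (by norm_num) |>.1 this
      rw [h]
      apply Finset.sum_eq_zero; intro i _; rw [hall i]; ring
    · simp only [hVdef]
      rw [_root_.enorm]
      have : ∀ i : Fin r, W j i * (W j i / Real.sqrt (∑ i, W j i ^ 2)) =
          W j i ^ 2 / Real.sqrt (∑ i, W j i ^ 2) := by intro i; ring
      simp_rw [this, ← Finset.sum_div]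
      exact Real.div_sqrt
  have hub : ∀ c ∈ {c : ℝ | ∃ M : Matrix (Fin n) (Fin r × Fin p) ℝ,
      opNorm M ≤ 1 ∧ c = frobInner M (traceLassoOp X W)}, c ≤ ∑ j, _root_.enorm (W j) := by
    rintro c ⟨M, hM, rfl⟩
    exact frobInner_ub hX W M hM
  have hmem : (∑ j : Fin p, _root_.enorm (W j)) ∈ {c : ℝ | ∃ M : Matrix (Fin n) (Fin r × Fin p) ℝ,
      opNorm M ≤ 1 ∧ c = frobInner M (traceLassoOp X W)} :=
    ⟨traceLassoOp X V, opNorm_tlo_le hX V hV, hmemval.symm⟩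
  rw [nuclearNorm]
  apply le_antisymm
  · exact Real.sSup_le hub (Finset.sum_nonneg fun j _ => Real.sqrt_nonneg _)
  · exact le_csSup ⟨_, hub⟩ hmem
end

section
/- Let A ∈ ℝ^{p×p} be symmetric positive definite and let U ∈ ℝ^{p×r} satisfy UᵀAU = I_r. Then the matrices {AU(e_ie_jᵀ + e_je_iᵀ) : 1 ≤ i ≤ j ≤ r} ⊂ ℝ^{p×r} are linearly independent, where e_i ∈ ℝ^r is the i-th standard basis vector. -/
open Matrix

lemma sym_basis_li {r : ℕ} :
    LinearIndependent ℝ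
      (fun q : {q : Fin r × Fin r // q.1 ≤ q.2} =>
        Matrix.single q.1.1 q.1.2 (1 : ℝ)
          + Matrix.single q.1.2 q.1.1 (1 : ℝ)) := by
  rw [Fintype.linearIndependent_iff]
  intro g hg q
  have h := congrFun (congrFun hg q.1.1) q.1.2
  simp only [Matrix.sum_apply, Matrix.smul_apply, Matrix.add_apply,
    Matrix.single, Matrix.of_apply, Matrix.zero_apply, smul_eq_mul] at h
  rw [Finset.sum_eq_single q] at h
  · by_cases hd : q.1.1 = q.1.2
    · simp [hd] at h; linarith
    · simp [hd, Ne.symm hd] at h; linarith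
  · intro b _ hbq
    have : ¬(b.1.1 = q.1.1 ∧ b.1.2 = q.1.2) := by
      intro ⟨h1, h2⟩
      exact hbq (Subtype.ext (Prod.ext h1 h2))
    have h2 : ¬(b.1.2 = q.1.1 ∧ b.1.1 = q.1.2) := by
      rintro ⟨h1, h2⟩
      have hq : q.1.2 ≤ q.1.1 := h2 ▸ h1 ▸ b.2
      have hqq : q.1.1 = q.1.2 := le_antisymm q.2 hq
      exact hbq (Subtype.ext (Prod.ext (h2.trans hqq.symm) (h1.trans hqq)))
    simp [this, h2]
  · intro h; exact absurd (Finset.mem_univ q) h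

/-- For A symmetric positive definite and UᵀAU = I_r, the matrices
{AU(eᵢeⱼᵀ + eⱼeᵢᵀ) : 1 ≤ i ≤ j ≤ r} are linearly independent. -/
theorem stmt_15 {p r : ℕ} (A : Matrix (Fin p) (Fin p) ℝ) (hA : A.PosDef)
    (U : Matrix (Fin p) (Fin r) ℝ) (hU : Uᵀ * A * U = 1) :
    LinearIndependent ℝ
      (fun q : {q : Fin r × Fin r // q.1 ≤ q.2} =>
        A * U * (Matrix.single q.1.1 q.1.2 (1 : ℝ)
          + Matrix.single q.1.2 q.1.1 (1 : ℝ))) := by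
  let f : Matrix (Fin p) (Fin r) ℝ →ₗ[ℝ] Matrix (Fin r) (Fin r) ℝ :=
    { toFun := fun M => Uᵀ * M
      map_add' := fun M N => Matrix.mul_add _ _ _
      map_smul' := fun c M => (Matrix.mul_smul _ _ _) }
  have hcomp : (f ∘ fun q : {q : Fin r × Fin r // q.1 ≤ q.2} =>
      A * U * (Matrix.single q.1.1 q.1.2 (1 : ℝ)
        + Matrix.single q.1.2 q.1.1 (1 : ℝ)))
      = fun q => Matrix.single q.1.1 q.1.2 (1 : ℝ)
        + Matrix.single q.1.2 q.1.1 (1 : ℝ) := by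
    funext q
    show Uᵀ * (A * U * (_ : Matrix (Fin r) (Fin r) ℝ)) = _
    rw [← Matrix.mul_assoc, ← Matrix.mul_assoc, hU, Matrix.one_mul]
  exact LinearIndependent.of_comp f (hcomp ▸ sym_basis_li)
end
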